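/- The dynamic program g satisfies: the minimum over all tours of the path-metric W-TSP with fixed start node t (weight of t collected last) equals min( g(v_1,v_n,v_1,t) + f(0)·d(t,v_1), g(v_1,v_n,v_n,t) + f(0)·d(t,v_n) ). -/

import Mathlib

/-- Cost of the restricted tour on interval `[i, j]` determined by a choice sequence
(see the path-metric DP); identical to `restrictedCost` in stmt_9. -/
noncomputable def restrictedCost (f : ℝ → ℝ) (x w : ℕ → ℝ) (xt Wtot : ℝ) :
    ℕ → ℕ → ℕ → ℝ → List Bool → ℝ
  | _, _, cur, _, [] => |x cur - xt| * f Wtot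
  | i, j, cur, acc, b :: bs =>
      if cur = i then
        let nxt : ℕ := if b then i + 1 else j
        f (acc + w i) * |x i - x nxt| + restrictedCost f x w xt Wtot (i + 1) j nxt (acc + w i) bs
      else
        let nxt : ℕ := if b then i else j - 1
        f (acc + w j) * |x j - x nxt| + restrictedCost f x w xt Wtot i (j - 1) nxt (acc + w j) bs

/-- The DP value `g(v_i, v_j, s, t)`. -/
noncomputable def gDP (f : ℝ → ℝ) (x w : ℕ → ℝ) (xt Wtot : ℝ) (i j cur : ℕ) (acc : ℝ) : ℝ :=
  sInf ((fun bs => restrictedCost f x w xt Wtot i j cur acc bs) ''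
    { bs : List Bool | bs.length = j - i })

/-- Cost of a full path-metric W-TSP tour with fixed start `t` (at coordinate `xt`,
its weight collected last): go from `t` to the first node at cost-rate `f 0`, then
traverse the nodes `0, …, m` of the line in the order `σ`, finally return to `t`
carrying the total weight. -/
noncomputable def fullTourCost (m : ℕ) (x w : ℕ → ℝ) (xt : ℝ) (f : ℝ → ℝ)
    (σ : Equiv.Perm (Fin (m + 1))) : ℝ :=
  f 0 * |xt - x (σ 0).val| +
    (∑ i : Fin m, f (∑ j ∈ Finset.Iic (i.castSucc : Fin (m + 1)), w (σ j).val) *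
      |x (σ i.castSucc).val - x (σ i.succ).val|) +
    f (∑ ℓ ∈ Finset.range (m + 1), w ℓ) * |x (σ (Fin.last m)).val - xt|

section Aux
variable (f : ℝ → ℝ) (x w : ℕ → ℝ) (xt Wtot : ℝ)

noncomputable def listCost : ℝ → ℝ → List ℕ → ℝ
  | _, xc, [] => f Wtot * |xc - xt|
  | acc, xc, p :: ps => f acc * |xc - x p| + listCost (acc + w p) (x p) ps

def toList : ℕ → ℕ → ℕ → List Bool → List ℕ
  | _, _, _, [] => []
  | i, j, cur, b :: bs =>
    if cur = i then
      let nxt : ℕ := if b then i + 1 else j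
      nxt :: toList (i + 1) j nxt bs
    else
      let nxt : ℕ := if b then i else j - 1
      nxt :: toList i (j - 1) nxt bs

lemma rc_eq_listCost : ∀ (bs : List Bool) (i j cur : ℕ), (cur = i ∨ cur = j) → ∀ (acc : ℝ),
    restrictedCost f x w xt Wtot i j cur acc bs
      = listCost f x w xt Wtot (acc + w cur) (x cur) (toList i j cur bs) := by
  intro bs
  induction bs with
  | nil => intro i j cur _ acc; simp [restrictedCost, toList, listCost, mul_comm]
  | cons b bs ih =>
      intro i j cur hcur acc
      by_cases h : cur = i
      · subst h
        simp only [restrictedCost, toList, if_pos rfl, listCost]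
        rw [ih _ _ _ (by rcases b with _ | _ <;> simp)]
        rfl
      · have hj : cur = j := by tauto
        subst hj
        simp only [restrictedCost, toList, if_neg h, listCost]
        rw [ih _ _ _ (by rcases b with _ | _ <;> simp)]

lemma toList_perm : ∀ (bs : List Bool) (i j cur : ℕ), i ≤ j → (cur = i ∨ cur = j) →
    bs.length = j - i → (cur :: toList i j cur bs).Perm (List.range' i (j - i + 1)) := by
  intro bs
  induction bs with
  | nil =>
      intro i j cur hij hcur hlen
      simp only [List.length_nil] at hlen
      have : i = j := by omega
      subst this
      rcases hcur with h | h <;> simp [toList, h]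
  | cons b bs ih =>
      intro i j cur hij hcur hlen
      simp only [List.length_cons] at hlen
      have hlt : i < j := by omega
      by_cases h : cur = i
      · rw [h]
        simp only [toList, if_pos rfl]
        set nxt : ℕ := if b then i + 1 else j with hnxt
        have hp : (nxt :: toList (i + 1) j nxt bs).Perm (List.range' (i + 1) (j - (i+1) + 1)) := by
          apply ih
          · omega
          · rcases b with _ | _ <;> simp [hnxt]
          · omega
        have hrange : List.range' i (j - i + 1) = i :: List.range' (i + 1) (j - (i+1) + 1) := by
          have h1 : j - i + 1 = (j - (i+1) + 1) + 1 := by omega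
          rw [h1, List.range'_succ]
        rw [hrange]
        exact hp.cons i
      · have hj : cur = j := by tauto
        rw [hj]
        have h' : ¬ (j = i) := by omega
        simp only [toList, if_neg h']
        set nxt : ℕ := if b then i else j - 1 with hnxt
        have hp : (nxt :: toList i (j-1) nxt bs).Perm (List.range' i (j - 1 - i + 1)) := by
          apply ih
          · omega
          · rcases b with _ | _ <;> simp [hnxt]
          · omega
        have hrange : (List.range' i (j - i + 1)).Perm (j :: List.range' i (j - 1 - i + 1)) := by
          have h1 : j - i + 1 = (j - 1 - i + 1) + 1 := by omega
          have h2 : List.range' i (j - 1 - i + 1 + 1) = List.range' i (j - 1 - i + 1) ++ [i + (j - 1 - i + 1)] := by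
            rw [List.range'_1_concat]
          have h3 : i + (j - 1 - i + 1) = j := by omega
          rw [h1, h2, h3]
          exact (List.perm_append_singleton j _)
        exact (hp.cons j).trans hrange.symm

lemma gDP_finite (i j cur : ℕ) (acc : ℝ) :
    ((fun bs => restrictedCost f x w xt Wtot i j cur acc bs) ''
      { bs : List Bool | bs.length = j - i }).Finite :=
  (List.finite_length_eq _ _).image _

lemma gDP_nonempty (i j cur : ℕ) (acc : ℝ) :
    ((fun bs => restrictedCost f x w xt Wtot i j cur acc bs) ''
      { bs : List Bool | bs.length = j - i }).Nonempty :=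
  ⟨_, ⟨List.replicate (j - i) false, by simp, rfl⟩⟩

lemma gDP_le (i j cur : ℕ) (acc : ℝ) (bs : List Bool) (h : bs.length = j - i) :
    gDP f x w xt Wtot i j cur acc ≤ restrictedCost f x w xt Wtot i j cur acc bs :=
  csInf_le ((gDP_finite f x w xt Wtot i j cur acc).bddBelow) ⟨bs, h, rfl⟩

lemma gDP_exists (i j cur : ℕ) (acc : ℝ) :
    ∃ bs : List Bool, bs.length = j - i ∧
      restrictedCost f x w xt Wtot i j cur acc bs = gDP f x w xt Wtot i j cur acc := by
  obtain ⟨bs, h, he⟩ := (gDP_nonempty f x w xt Wtot i j cur acc).csInf_mem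
    (gDP_finite f x w xt Wtot i j cur acc)
  exact ⟨bs, h, he⟩

lemma gDP_singleton (q : ℕ) (acc : ℝ) :
    gDP f x w xt Wtot q q q acc = f Wtot * |x q - xt| := by
  have h : { bs : List Bool | bs.length = q - q } = {([] : List Bool)} := by
    ext bs; simp [List.length_eq_zero_iff]
  rw [gDP, h]
  simp [restrictedCost, mul_comm]

lemma gDP_step_LA {i j : ℕ} (h : i < j) (acc : ℝ) :
    gDP f x w xt Wtot i j i acc ≤
      f (acc + w i) * |x i - x (i + 1)| + gDP f x w xt Wtot (i + 1) j (i + 1) (acc + w i) := by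
  obtain ⟨bs, hlen, hbs⟩ := gDP_exists f x w xt Wtot (i + 1) j (i + 1) (acc + w i)
  have hle := gDP_le f x w xt Wtot i j i acc (true :: bs) (by simp [hlen]; omega)
  simpa [restrictedCost, hbs] using hle

lemma gDP_step_LO {i j : ℕ} (h : i < j) (acc : ℝ) :
    gDP f x w xt Wtot i j i acc ≤
      f (acc + w i) * |x i - x j| + gDP f x w xt Wtot (i + 1) j j (acc + w i) := by
  obtain ⟨bs, hlen, hbs⟩ := gDP_exists f x w xt Wtot (i + 1) j j (acc + w i)
  have hle := gDP_le f x w xt Wtot i j i acc (false :: bs) (by simp [hlen]; omega)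
  simpa [restrictedCost, hbs] using hle

lemma gDP_step_RA {i j : ℕ} (h : i < j) (acc : ℝ) :
    gDP f x w xt Wtot i j j acc ≤
      f (acc + w j) * |x j - x (j - 1)| + gDP f x w xt Wtot i (j - 1) (j - 1) (acc + w j) := by
  obtain ⟨bs, hlen, hbs⟩ := gDP_exists f x w xt Wtot i (j - 1) (j - 1) (acc + w j)
  have hle := gDP_le f x w xt Wtot i j j acc (false :: bs) (by simp [hlen]; omega)
  have hne : ¬ (j = i) := by omega
  simpa [restrictedCost, hne, hbs] using hle

lemma gDP_step_RO {i j : ℕ} (h : i < j) (acc : ℝ) :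
    gDP f x w xt Wtot i j j acc ≤
      f (acc + w j) * |x j - x i| + gDP f x w xt Wtot i (j - 1) i (acc + w j) := by
  obtain ⟨bs, hlen, hbs⟩ := gDP_exists f x w xt Wtot i (j - 1) i (acc + w j)
  have hle := gDP_le f x w xt Wtot i j j acc (true :: bs) (by simp [hlen]; omega)
  have hne : ¬ (j = i) := by omega
  simpa [restrictedCost, hne, hbs] using hle

variable {x} in
lemma habs (hx : Monotone x) {a b : ℕ} (h : a ≤ b) : |x a - x b| = x b - x a := by
  rw [abs_sub_comm]; exact abs_of_nonneg (sub_nonneg.2 (hx h))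

variable {f x w}

lemma chainLL (hx : Monotone x) (hw : ∀ ℓ, 0 ≤ w ℓ) (hf : Monotone f) :
    ∀ (d i j : ℕ) (acc : ℝ), 1 ≤ d → i + d ≤ j →
      gDP f x w xt Wtot i j i acc ≤
        f (acc + ∑ ℓ ∈ Finset.Icc i (i + d - 1), w ℓ) * |x i - x (i + d)| +
          gDP f x w xt Wtot (i + d) j (i + d) (acc + ∑ ℓ ∈ Finset.Icc i (i + d - 1), w ℓ) := by
  intro d
  induction d with
  | zero => omega
  | succ d ih =>
      intro i j acc _ hij
      rcases Nat.eq_zero_or_pos d with rfl | hd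
      · simpa [Finset.Icc_self] using gDP_step_LA f x w xt Wtot (show i < j by omega) acc
      · have h1 := gDP_step_LA f x w xt Wtot (show i < j by omega) acc
        have h2 := ih (i + 1) j (acc + w i) hd (by omega)
        have hsum : acc + w i + ∑ ℓ ∈ Finset.Icc (i + 1) (i + 1 + d - 1), w ℓ
            = acc + ∑ ℓ ∈ Finset.Icc i (i + (d + 1) - 1), w ℓ := by
          have e1 : i + 1 + d - 1 = i + d := by omega
          have e2 : i + (d + 1) - 1 = i + d := by omega
          rw [e1, e2, ← Finset.Ioc_insert_left (by omega : i ≤ i + d),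
            Finset.sum_insert (by simp), ← Finset.Icc_add_one_left_eq_Ioc]
          ring
        rw [hsum] at h2
        have e3 : i + 1 + d = i + (d + 1) := by omega
        rw [e3] at h2
        set A := acc + ∑ ℓ ∈ Finset.Icc i (i + (d + 1) - 1), w ℓ with hA
        have hfle : f (acc + w i) ≤ f A := by
          apply hf
          rw [hA]
          have e2 : i + (d + 1) - 1 = i + d := by omega
          rw [e2, ← Finset.Ioc_insert_left (by omega : i ≤ i + d),
            Finset.sum_insert (by simp), ← Finset.Icc_add_one_left_eq_Ioc]
          have : 0 ≤ ∑ ℓ ∈ Finset.Icc (i + 1) (i + d), w ℓ :=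
            Finset.sum_nonneg fun ℓ _ => hw ℓ
          linarith
        rw [habs hx (by omega : i ≤ i + 1)] at h1
        rw [habs hx (by omega : i + 1 ≤ i + (d + 1))] at h2
        rw [habs hx (by omega : i ≤ i + (d + 1))]
        have hx1 : x i ≤ x (i + 1) := hx (by omega)
        have hx2 : x (i + 1) ≤ x (i + (d + 1)) := hx (by omega)
        nlinarith [mul_le_mul_of_nonneg_right hfle (sub_nonneg.2 hx1)]

lemma habs' (hx : Monotone x) {a b : ℕ} (h : a ≤ b) : |x b - x a| = x b - x a :=
  abs_of_nonneg (sub_nonneg.2 (hx h))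

lemma chainLR (hx : Monotone x) (hw : ∀ ℓ, 0 ≤ w ℓ) (hf : Monotone f) :
    ∀ (d i j : ℕ) (acc : ℝ), 1 ≤ d → i + d ≤ j →
      gDP f x w xt Wtot i j i acc ≤
        f (acc + ∑ ℓ ∈ Finset.Icc i (i + d - 1), w ℓ) * |x i - x j| +
          gDP f x w xt Wtot (i + d) j j (acc + ∑ ℓ ∈ Finset.Icc i (i + d - 1), w ℓ) := by
  intro d
  induction d with
  | zero => omega
  | succ d ih =>
      intro i j acc _ hij
      rcases Nat.eq_zero_or_pos d with rfl | hd
      · simpa [Finset.Icc_self] using gDP_step_LO f x w xt Wtot (show i < j by omega) acc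
      · have h1 := gDP_step_LA f x w xt Wtot (show i < j by omega) acc
        have h2 := ih (i + 1) j (acc + w i) hd (by omega)
        have hsum : acc + w i + ∑ ℓ ∈ Finset.Icc (i + 1) (i + 1 + d - 1), w ℓ
            = acc + ∑ ℓ ∈ Finset.Icc i (i + (d + 1) - 1), w ℓ := by
          have e1 : i + 1 + d - 1 = i + d := by omega
          have e2 : i + (d + 1) - 1 = i + d := by omega
          rw [e1, e2, ← Finset.Ioc_insert_left (by omega : i ≤ i + d),
            Finset.sum_insert (by simp), ← Finset.Icc_add_one_left_eq_Ioc]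
          ring
        rw [hsum] at h2
        have e3 : i + 1 + d = i + (d + 1) := by omega
        rw [e3] at h2
        set A := acc + ∑ ℓ ∈ Finset.Icc i (i + (d + 1) - 1), w ℓ with hA
        have hfle : f (acc + w i) ≤ f A := by
          apply hf
          rw [hA]
          have e2 : i + (d + 1) - 1 = i + d := by omega
          rw [e2, ← Finset.Ioc_insert_left (by omega : i ≤ i + d),
            Finset.sum_insert (by simp), ← Finset.Icc_add_one_left_eq_Ioc]
          have : 0 ≤ ∑ ℓ ∈ Finset.Icc (i + 1) (i + d), w ℓ :=
            Finset.sum_nonneg fun ℓ _ => hw ℓ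
          linarith
        rw [habs hx (by omega : i ≤ i + 1)] at h1
        rw [habs hx (by omega : i + 1 ≤ j)] at h2
        rw [habs hx (by omega : i ≤ j)]
        have hx1 : x i ≤ x (i + 1) := hx (by omega)
        nlinarith [mul_le_mul_of_nonneg_right hfle (sub_nonneg.2 hx1)]

lemma chainRR (hx : Monotone x) (hw : ∀ ℓ, 0 ≤ w ℓ) (hf : Monotone f) :
    ∀ (d i j' : ℕ) (acc : ℝ), 1 ≤ d → i ≤ j' →
      gDP f x w xt Wtot i (j' + d) (j' + d) acc ≤
        f (acc + ∑ ℓ ∈ Finset.Icc (j' + 1) (j' + d), w ℓ) * |x (j' + d) - x j'| +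
          gDP f x w xt Wtot i j' j' (acc + ∑ ℓ ∈ Finset.Icc (j' + 1) (j' + d), w ℓ) := by
  intro d
  induction d with
  | zero => omega
  | succ d ih =>
      intro i j' acc _ hij
      rcases Nat.eq_zero_or_pos d with rfl | hd
      · have := gDP_step_RA f x w xt Wtot (show i < j' + 1 by omega) acc
        simpa [Finset.Icc_self] using this
      · have h1 := gDP_step_RA f x w xt Wtot (show i < j' + (d + 1) by omega) acc
        have e1 : j' + (d + 1) - 1 = j' + d := by omega
        rw [e1] at h1
        have h2 := ih i j' (acc + w (j' + (d + 1))) hd hij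
        have hsum : acc + w (j' + (d + 1)) + ∑ ℓ ∈ Finset.Icc (j' + 1) (j' + d), w ℓ
            = acc + ∑ ℓ ∈ Finset.Icc (j' + 1) (j' + (d + 1)), w ℓ := by
          rw [show j' + (d + 1) = j' + d + 1 from rfl,
            Finset.sum_Icc_succ_top (by omega : j' + 1 ≤ j' + d + 1)]
          ring
        rw [hsum] at h2
        set A := acc + ∑ ℓ ∈ Finset.Icc (j' + 1) (j' + (d + 1)), w ℓ with hA
        have hfle : f (acc + w (j' + (d + 1))) ≤ f A := by
          apply hf
          rw [hA, show j' + (d + 1) = j' + d + 1 from rfl,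
            Finset.sum_Icc_succ_top (by omega : j' + 1 ≤ j' + d + 1)]
          have : 0 ≤ ∑ ℓ ∈ Finset.Icc (j' + 1) (j' + d), w ℓ :=
            Finset.sum_nonneg fun ℓ _ => hw ℓ
          linarith
        rw [habs' hx (by omega : j' + d ≤ j' + (d + 1))] at h1
        rw [habs' hx (by omega : j' ≤ j' + d)] at h2
        rw [habs' hx (by omega : j' ≤ j' + (d + 1))]
        have hx1 : x (j' + d) ≤ x (j' + (d + 1)) := hx (by omega)
        nlinarith [mul_le_mul_of_nonneg_right hfle (sub_nonneg.2 hx1)]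

lemma chainRL (hx : Monotone x) (hw : ∀ ℓ, 0 ≤ w ℓ) (hf : Monotone f) :
    ∀ (d i j' : ℕ) (acc : ℝ), 1 ≤ d → i ≤ j' →
      gDP f x w xt Wtot i (j' + d) (j' + d) acc ≤
        f (acc + ∑ ℓ ∈ Finset.Icc (j' + 1) (j' + d), w ℓ) * |x (j' + d) - x i| +
          gDP f x w xt Wtot i j' i (acc + ∑ ℓ ∈ Finset.Icc (j' + 1) (j' + d), w ℓ) := by
  intro d
  induction d with
  | zero => omega
  | succ d ih =>
      intro i j' acc _ hij
      rcases Nat.eq_zero_or_pos d with rfl | hd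
      · have := gDP_step_RO f x w xt Wtot (show i < j' + 1 by omega) acc
        simpa [Finset.Icc_self] using this
      · have h1 := gDP_step_RA f x w xt Wtot (show i < j' + (d + 1) by omega) acc
        have e1 : j' + (d + 1) - 1 = j' + d := by omega
        rw [e1] at h1
        have h2 := ih i j' (acc + w (j' + (d + 1))) hd hij
        have hsum : acc + w (j' + (d + 1)) + ∑ ℓ ∈ Finset.Icc (j' + 1) (j' + d), w ℓ
            = acc + ∑ ℓ ∈ Finset.Icc (j' + 1) (j' + (d + 1)), w ℓ := by
          rw [show j' + (d + 1) = j' + d + 1 from rfl,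
            Finset.sum_Icc_succ_top (by omega : j' + 1 ≤ j' + d + 1)]
          ring
        rw [hsum] at h2
        set A := acc + ∑ ℓ ∈ Finset.Icc (j' + 1) (j' + (d + 1)), w ℓ with hA
        have hfle : f (acc + w (j' + (d + 1))) ≤ f A := by
          apply hf
          rw [hA, show j' + (d + 1) = j' + d + 1 from rfl,
            Finset.sum_Icc_succ_top (by omega : j' + 1 ≤ j' + d + 1)]
          have : 0 ≤ ∑ ℓ ∈ Finset.Icc (j' + 1) (j' + d), w ℓ :=
            Finset.sum_nonneg fun ℓ _ => hw ℓ
          linarith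
        rw [habs' hx (by omega : j' + d ≤ j' + (d + 1))] at h1
        rw [habs' hx (by omega : i ≤ j' + d)] at h2
        rw [habs' hx (by omega : i ≤ j' + (d + 1))]
        have hx1 : x (j' + d) ≤ x (j' + (d + 1)) := hx (by omega)
        nlinarith [mul_le_mul_of_nonneg_right hfle (sub_nonneg.2 hx1)]


variable (f x w)

lemma lower (hx : Monotone x) (hw : ∀ ℓ, 0 ≤ w ℓ) (hf : Monotone f) (hf0 : ∀ y, 0 ≤ f y) :
    ∀ (l : List ℕ) (_ : l.Nodup) (hS : l.toFinset.Nonempty) (acc0 xc : ℝ),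
      min (f acc0 * |xc - x (l.toFinset.min' hS)| +
            gDP f x w xt Wtot (l.toFinset.min' hS) (l.toFinset.max' hS) (l.toFinset.min' hS) acc0)
          (f acc0 * |xc - x (l.toFinset.max' hS)| +
            gDP f x w xt Wtot (l.toFinset.min' hS) (l.toFinset.max' hS) (l.toFinset.max' hS) acc0)
        ≤ listCost f x w xt Wtot
            (acc0 + ∑ p ∈ Finset.Icc (l.toFinset.min' hS) (l.toFinset.max' hS) \ l.toFinset, w p)
            xc l := by
  intro l
  induction l with
  | nil => intro _ hS _ _; simp at hS
  | cons q rest ih =>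
      intro hnd hS acc0 xc
      obtain ⟨hq, hndr⟩ := List.nodup_cons.mp hnd
      set S := (q :: rest).toFinset with hSdef
      set i := S.min' hS with hidef
      set j := S.max' hS with hjdef
      have hqS : q ∈ S := by simp [hSdef]
      have hiq : i ≤ q := Finset.min'_le S q hqS
      have hqj : q ≤ j := Finset.le_max' S q hqS
      have hij : i ≤ j := le_trans hiq hqj
      have hiS : i ∈ S := Finset.min'_mem S hS
      have hjS : j ∈ S := Finset.max'_mem S hS
      have hDnn : (0:ℝ) ≤ ∑ p ∈ Finset.Icc i j \ S, w p :=
        Finset.sum_nonneg fun p _ => hw p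
      set acc := acc0 + ∑ p ∈ Finset.Icc i j \ S, w p with haccdef
      have hfacc : f acc0 ≤ f acc := hf (by linarith)
      have hlc : listCost f x w xt Wtot acc xc (q :: rest)
          = f acc * |xc - x q| + listCost f x w xt Wtot (acc + w q) (x q) rest := rfl
      rcases eq_or_ne rest [] with rfl | hrne
      · -- singleton
        have hSq : S = {q} := by simp [hSdef]
        have hiq' : i = q := Finset.mem_singleton.mp (hSq ▸ hiS)
        have hjq' : j = q := Finset.mem_singleton.mp (hSq ▸ hjS)
        have hacc0 : acc = acc0 := by
          rw [haccdef, hiq', hjq', hSq]; simp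
        rw [hiq', hjq', hacc0]
        rw [gDP_singleton, min_self]
        simp [listCost]
      · -- rest nonempty
        have hT : rest.toFinset.Nonempty := by
          rcases rest with _ | ⟨a, rest'⟩
          · exact absurd rfl hrne
          · exact ⟨a, by simp⟩
        set T := rest.toFinset with hTdef
        have hTS : T = S.erase q := by
          rw [hSdef, List.toFinset_cons, Finset.erase_insert (by simpa using hq)]
        have hTsub : T ⊆ S := by rw [hTS]; exact Finset.erase_subset q S
        have hqT : q ∉ T := by rw [hTS]; exact Finset.notMem_erase q S
        have hmemS : ∀ a, a ∈ S ↔ a = q ∨ a ∈ T := by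
          intro a; rw [hSdef, List.toFinset_cons, hTdef]; simp
        -- two distinct elements
        obtain ⟨t0, ht0⟩ := id hT
        have hilj : i < j := by
          rcases Nat.lt_or_ge i j with h | h
          · exact h
          have hij' : i = j := by omega
          have h1 : q = i := le_antisymm (hij' ▸ hqj) hiq
          have h2 : t0 = i := by
            have := Finset.min'_le S t0 (hTsub ht0)
            have := Finset.le_max' S t0 (hTsub ht0)
            omega
          exact absurd (h2.trans h1.symm) (by rintro rfl; exact hqT ht0)
        have ihr := ih hndr hT
        rcases eq_or_ne q i with hqi | hqi
        · -- q is the left end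
          set i' := T.min' hT with hi'def
          have hi'T : i' ∈ T := T.min'_mem hT
          have hjT : j ∈ T := by
            rw [hTS]; exact Finset.mem_erase.mpr ⟨by omega, hjS⟩
          have hmaxT : T.max' hT = j :=
            le_antisymm (Finset.le_max' S _ (hTsub (T.max'_mem hT))) (Finset.le_max' T j hjT)
          have hii' : i < i' := by
            have h1 : i ≤ i' := Finset.min'_le S i' (hTsub hi'T)
            have h2 : i' ≠ i := fun h => hqT (by rw [hqi, ← h]; exact hi'T)
            omega
          have hi'j : i' ≤ j := by
            have := Finset.le_max' T i' hi'T
            rwa [hmaxT] at this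
          have hIoo : ∀ s, s ∈ T → i' ≤ s := fun s hs => Finset.min'_le T s hs
          have hset : Finset.Icc i (i' - 1) ∪ (Finset.Icc i' j \ T)
              = insert i (Finset.Icc i j \ S) := by
            ext a
            simp only [Finset.mem_union, Finset.mem_Icc, Finset.mem_sdiff, Finset.mem_insert]
            constructor
            · rintro (⟨h1, h2⟩ | ⟨⟨h1, h2⟩, h3⟩)
              · rcases eq_or_ne a i with rfl | hne
                · exact Or.inl rfl
                · refine Or.inr ⟨⟨h1, by omega⟩, fun hmem => ?_⟩
                  rcases (hmemS a).mp hmem with rfl | hmem'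
                  · omega
                  · have := hIoo a hmem'; omega
              · refine Or.inr ⟨⟨by omega, h2⟩, fun hmem => ?_⟩
                rcases (hmemS a).mp hmem with rfl | hmem'
                · omega
                · exact h3 hmem'
            · rintro (rfl | ⟨⟨h1, h2⟩, h3⟩)
              · exact Or.inl ⟨le_refl _, by omega⟩
              · rcases Nat.lt_or_ge a i' with h | h
                · exact Or.inl ⟨h1, by omega⟩
                · exact Or.inr ⟨⟨h, h2⟩, fun hmem => h3 ((hmemS a).mpr (Or.inr hmem))⟩
          have hdisj : Disjoint (Finset.Icc i (i' - 1)) (Finset.Icc i' j \ T) := by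
            rw [Finset.disjoint_left]
            intro a ha hb
            simp only [Finset.mem_Icc] at ha
            simp only [Finset.mem_sdiff, Finset.mem_Icc] at hb
            omega
          have hinotD : i ∉ Finset.Icc i j \ S := by
            simp [Finset.mem_sdiff, hiS]
          have hsplit : (∑ ℓ ∈ Finset.Icc i (i' - 1), w ℓ) + ∑ ℓ ∈ Finset.Icc i' j \ T, w ℓ
              = w i + ∑ p ∈ Finset.Icc i j \ S, w p := by
            rw [← Finset.sum_union hdisj, hset, Finset.sum_insert hinotD]
          set acc0' := acc0 + ∑ ℓ ∈ Finset.Icc i (i' - 1), w ℓ with hacc0'def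
          have hihr := ihr acc0' (x q)
          rw [hmaxT] at hihr
          have hacc_eq : acc0' + ∑ ℓ ∈ Finset.Icc i' j \ T, w ℓ = acc + w q := by
            rw [hacc0'def, haccdef, hqi]; linarith [hsplit]
          rw [hacc_eq] at hihr
          have chain1 := chainLL xt Wtot hx hw hf (i' - i) i j acc0 (by omega) (by omega)
          rw [show i + (i' - i) = i' by omega] at chain1
          rw [← hacc0'def] at chain1
          have chain2 := chainLR xt Wtot hx hw hf (i' - i) i j acc0 (by omega) (by omega)
          rw [show i + (i' - i) = i' by omega] at chain2
          rw [← hacc0'def] at chain2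
          have hgle : gDP f x w xt Wtot i j i acc0
              ≤ listCost f x w xt Wtot (acc + w q) (x q) rest := by
            refine le_trans (le_min ?_ ?_) hihr
            · rw [hqi]; exact chain1
            · rw [hqi]; exact chain2
          calc min (f acc0 * |xc - x i| + gDP f x w xt Wtot i j i acc0)
                (f acc0 * |xc - x j| + gDP f x w xt Wtot i j j acc0)
              ≤ f acc0 * |xc - x i| + gDP f x w xt Wtot i j i acc0 := min_le_left _ _
            _ ≤ f acc * |xc - x q| + listCost f x w xt Wtot (acc + w q) (x q) rest := by
                have t3 : f acc0 * |xc - x i| ≤ f acc * |xc - x i| :=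
                  mul_le_mul_of_nonneg_right hfacc (abs_nonneg _)
                rw [hqi] at hgle
                rw [hqi]
                linarith
            _ = listCost f x w xt Wtot acc xc (q :: rest) := hlc.symm
        · rcases eq_or_ne q j with hqj' | hqj'
          · -- q is the right end
            set j' := T.max' hT with hj'def
            have hj'T : j' ∈ T := T.max'_mem hT
            have hiT : i ∈ T := by
              rw [hTS]; exact Finset.mem_erase.mpr ⟨by omega, hiS⟩
            have hminT : T.min' hT = i :=
              le_antisymm (Finset.min'_le T i hiT) (Finset.min'_le S _ (hTsub (T.min'_mem hT)))
            have hjj' : j' < j := by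
              have h1 : j' ≤ j := Finset.le_max' S j' (hTsub hj'T)
              have h2 : j' ≠ j := fun h => hqT (by rw [hqj', ← h]; exact hj'T)
              omega
            have hij' : i ≤ j' := by
              have := Finset.min'_le T j' hj'T
              rwa [hminT] at this
            have hIoo : ∀ s, s ∈ T → s ≤ j' := fun s hs => Finset.le_max' T s hs
            have hset : Finset.Icc (j' + 1) j ∪ (Finset.Icc i j' \ T)
                = insert j (Finset.Icc i j \ S) := by
              ext a
              simp only [Finset.mem_union, Finset.mem_Icc, Finset.mem_sdiff, Finset.mem_insert]
              constructor
              · rintro (⟨h1, h2⟩ | ⟨⟨h1, h2⟩, h3⟩)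
                · rcases eq_or_ne a j with rfl | hne
                  · exact Or.inl rfl
                  · refine Or.inr ⟨⟨by omega, h2⟩, fun hmem => ?_⟩
                    rcases (hmemS a).mp hmem with rfl | hmem'
                    · omega
                    · have := hIoo a hmem'; omega
                · refine Or.inr ⟨⟨h1, by omega⟩, fun hmem => ?_⟩
                  rcases (hmemS a).mp hmem with rfl | hmem'
                  · omega
                  · exact h3 hmem'
              · rintro (rfl | ⟨⟨h1, h2⟩, h3⟩)
                · exact Or.inl ⟨by omega, le_refl _⟩
                · rcases Nat.lt_or_ge j' a with h | h
                  · exact Or.inl ⟨by omega, h2⟩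
                  · exact Or.inr ⟨⟨h1, h⟩, fun hmem => h3 ((hmemS a).mpr (Or.inr hmem))⟩
            have hdisj : Disjoint (Finset.Icc (j' + 1) j) (Finset.Icc i j' \ T) := by
              rw [Finset.disjoint_left]
              intro a ha hb
              simp only [Finset.mem_Icc] at ha
              simp only [Finset.mem_sdiff, Finset.mem_Icc] at hb
              omega
            have hjnotD : j ∉ Finset.Icc i j \ S := by
              simp [Finset.mem_sdiff, hjS]
            have hsplit : (∑ ℓ ∈ Finset.Icc (j' + 1) j, w ℓ) + ∑ ℓ ∈ Finset.Icc i j' \ T, w ℓ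
                = w j + ∑ p ∈ Finset.Icc i j \ S, w p := by
              rw [← Finset.sum_union hdisj, hset, Finset.sum_insert hjnotD]
            set acc0' := acc0 + ∑ ℓ ∈ Finset.Icc (j' + 1) j, w ℓ with hacc0'def
            have hihr := ihr acc0' (x q)
            rw [hminT] at hihr
            have hacc_eq : acc0' + ∑ ℓ ∈ Finset.Icc i j' \ T, w ℓ = acc + w q := by
              rw [hacc0'def, haccdef, hqj']; linarith [hsplit]
            rw [hacc_eq] at hihr
            have chain1 := chainRL xt Wtot hx hw hf (j - j') i j' acc0 (by omega) (by omega)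
            rw [show j' + (j - j') = j by omega] at chain1
            rw [← hacc0'def] at chain1
            have chain2 := chainRR xt Wtot hx hw hf (j - j') i j' acc0 (by omega) (by omega)
            rw [show j' + (j - j') = j by omega] at chain2
            rw [← hacc0'def] at chain2
            have hgle : gDP f x w xt Wtot i j j acc0
                ≤ listCost f x w xt Wtot (acc + w q) (x q) rest := by
              refine le_trans (le_min ?_ ?_) hihr
              · rw [hqj']; exact chain1
              · rw [hqj']; exact chain2
            calc min (f acc0 * |xc - x i| + gDP f x w xt Wtot i j i acc0)
                  (f acc0 * |xc - x j| + gDP f x w xt Wtot i j j acc0)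
                ≤ f acc0 * |xc - x j| + gDP f x w xt Wtot i j j acc0 := min_le_right _ _
              _ ≤ f acc * |xc - x q| + listCost f x w xt Wtot (acc + w q) (x q) rest := by
                  have t3 : f acc0 * |xc - x j| ≤ f acc * |xc - x j| :=
                    mul_le_mul_of_nonneg_right hfacc (abs_nonneg _)
                  rw [hqj'] at hgle
                  rw [hqj']
                  linarith
              _ = listCost f x w xt Wtot acc xc (q :: rest) := hlc.symm
          · -- q is interior
            have hiT : i ∈ T := by
              rw [hTS]; exact Finset.mem_erase.mpr ⟨fun h => hqi h.symm, hiS⟩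
            have hjT : j ∈ T := by
              rw [hTS]; exact Finset.mem_erase.mpr ⟨fun h => hqj' h.symm, hjS⟩
            have hminT : T.min' hT = i :=
              le_antisymm (Finset.min'_le T i hiT) (Finset.min'_le S _ (hTsub (T.min'_mem hT)))
            have hmaxT : T.max' hT = j :=
              le_antisymm (Finset.le_max' S _ (hTsub (T.max'_mem hT))) (Finset.le_max' T j hjT)
            have hD' : Finset.Icc i j \ T = insert q (Finset.Icc i j \ S) := by
              ext a
              simp only [Finset.mem_sdiff, Finset.mem_Icc, Finset.mem_insert]
              constructor
              · rintro ⟨⟨h1, h2⟩, h3⟩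
                rcases eq_or_ne a q with rfl | hne
                · exact Or.inl rfl
                · refine Or.inr ⟨⟨h1, h2⟩, fun hmem => ?_⟩
                  rcases (hmemS a).mp hmem with rfl | hmem'
                  · exact hne rfl
                  · exact h3 hmem'
              · rintro (rfl | ⟨⟨h1, h2⟩, h3⟩)
                · exact ⟨⟨hiq, hqj⟩, hqT⟩
                · exact ⟨⟨h1, h2⟩, fun hmem => h3 ((hmemS a).mpr (Or.inr hmem))⟩
            have hqD : q ∉ Finset.Icc i j \ S := by
              simp [Finset.mem_sdiff, hqS]
            have hsum' : ∑ ℓ ∈ Finset.Icc i j \ T, w ℓ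
                = w q + ∑ p ∈ Finset.Icc i j \ S, w p := by
              rw [hD', Finset.sum_insert hqD]
            have hihr := ihr acc0 (x q)
            rw [hminT, hmaxT] at hihr
            have hacc_eq : acc0 + ∑ ℓ ∈ Finset.Icc i j \ T, w ℓ = acc + w q := by
              rw [haccdef, hsum']; ring
            rw [hacc_eq] at hihr
            rw [hlc]
            rcases le_total (f acc0 * |x q - x i| + gDP f x w xt Wtot i j i acc0)
                (f acc0 * |x q - x j| + gDP f x w xt Wtot i j j acc0) with hmin | hmin
            · rw [min_eq_left hmin] at hihr
              calc min (f acc0 * |xc - x i| + gDP f x w xt Wtot i j i acc0)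
                    (f acc0 * |xc - x j| + gDP f x w xt Wtot i j j acc0)
                  ≤ f acc0 * |xc - x i| + gDP f x w xt Wtot i j i acc0 := min_le_left _ _
                _ ≤ f acc * |xc - x q| + listCost f x w xt Wtot (acc + w q) (x q) rest := by
                    have t1 : |xc - x i| ≤ |xc - x q| + |x q - x i| := abs_sub_le xc (x q) (x i)
                    have t2 := mul_le_mul_of_nonneg_left t1 (hf0 acc0)
                    have t3 : f acc0 * |xc - x q| ≤ f acc * |xc - x q| :=
                      mul_le_mul_of_nonneg_right hfacc (abs_nonneg _)
                    nlinarith [hihr]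
            · rw [min_eq_right hmin] at hihr
              calc min (f acc0 * |xc - x i| + gDP f x w xt Wtot i j i acc0)
                    (f acc0 * |xc - x j| + gDP f x w xt Wtot i j j acc0)
                  ≤ f acc0 * |xc - x j| + gDP f x w xt Wtot i j j acc0 := min_le_right _ _
                _ ≤ f acc * |xc - x q| + listCost f x w xt Wtot (acc + w q) (x q) rest := by
                    have t1 : |xc - x j| ≤ |xc - x q| + |x q - x j| := abs_sub_le xc (x q) (x j)
                    have t2 := mul_le_mul_of_nonneg_left t1 (hf0 acc0)
                    have t3 : f acc0 * |xc - x q| ≤ f acc * |xc - x q| :=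
                      mul_le_mul_of_nonneg_right hfacc (abs_nonneg _)
                    nlinarith [hihr]

lemma sum_Iic_succ {n : ℕ} (g : Fin (n + 2) → ℝ) (c : Fin (n + 1)) :
    ∑ j ∈ Finset.Iic c.succ, g j = g 0 + ∑ j ∈ Finset.Iic c, g j.succ := by
  have h : Finset.Iic c.succ
      = insert 0 ((Finset.Iic c).map ⟨Fin.succ, Fin.succ_injective _⟩) := by
    ext a
    simp only [Finset.mem_Iic, Finset.mem_insert, Finset.mem_map, Function.Embedding.coeFn_mk]
    constructor
    · intro ha
      rcases Fin.eq_zero_or_eq_succ a with rfl | ⟨b, rfl⟩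
      · exact Or.inl rfl
      · exact Or.inr ⟨b, by rwa [Fin.succ_le_succ_iff] at ha, rfl⟩
    · rintro (rfl | ⟨b, hb, rfl⟩)
      · exact Fin.zero_le _
      · rwa [Fin.succ_le_succ_iff]
  rw [h, Finset.sum_insert (by simp [Fin.succ_ne_zero]), Finset.sum_map]
  rfl

lemma listCost_ofFn : ∀ (n : ℕ) (v : Fin (n + 1) → ℕ) (acc xc : ℝ),
    listCost f x w xt Wtot acc xc (List.ofFn v)
      = f acc * |xc - x (v 0)| +
        (∑ i : Fin n, f (acc + ∑ j ∈ Finset.Iic (i.castSucc), w (v j)) *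
          |x (v i.castSucc) - x (v i.succ)|) +
        f Wtot * |x (v (Fin.last n)) - xt| := by
  intro n
  induction n with
  | zero =>
      intro v acc xc
      show listCost f x w xt Wtot acc xc [v 0] = _
      simp [listCost]
  | succ n ih =>
      intro v acc xc
      rw [List.ofFn_succ]
      show f acc * |xc - x (v 0)| +
          listCost f x w xt Wtot (acc + w (v 0)) (x (v 0)) (List.ofFn fun i => v i.succ) = _
      rw [ih (fun i => v i.succ) (acc + w (v 0)) (x (v 0))]
      rw [Fin.sum_univ_succ (fun i : Fin (n + 1) =>
        f (acc + ∑ j ∈ Finset.Iic (i.castSucc), w (v j)) * |x (v i.castSucc) - x (v i.succ)|)]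
      have h0 : ∑ j ∈ Finset.Iic ((0 : Fin (n + 1)).castSucc), w (v j) = w (v 0) := by
        have : Finset.Iic ((0 : Fin (n + 1)).castSucc) = {(0 : Fin (n + 2))} := by
          ext a
          simp [Fin.le_zero_iff, show ((0 : Fin (n + 1)).castSucc) = (0 : Fin (n + 2)) from rfl]
        rw [this, Finset.sum_singleton]
      have hterm : ∀ i : Fin n,
          f (acc + ∑ j ∈ Finset.Iic ((i.succ : Fin (n + 1)).castSucc), w (v j)) *
              |x (v (i.succ : Fin (n + 1)).castSucc) - x (v (i.succ : Fin (n + 1)).succ)|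
            = f (acc + w (v 0) + ∑ j ∈ Finset.Iic i.castSucc, w (v j.succ)) *
              |x (v (i.castSucc).succ) - x (v (i.succ).succ)| := by
        intro i
        rw [← Fin.succ_castSucc, sum_Iic_succ (fun j => w (v j)) i.castSucc, ← add_assoc]
      rw [Finset.sum_congr rfl (fun i _ => hterm i), h0]
      rw [show ((0 : Fin (n + 1)).succ) = (1 : Fin (n + 2)) from rfl,
        ← Fin.succ_last]
      show _ = f acc * |xc - x (v 0)| +
        (f (acc + w (v 0)) * |x (v ((0 : Fin (n+1)).castSucc)) - x (v 1)| + _) + _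
      rw [show ((0 : Fin (n + 1)).castSucc) = (0 : Fin (n + 2)) from rfl]
      ring

lemma fullTour_eq_listCost (m : ℕ) (σ : Equiv.Perm (Fin (m + 1)))
    (hW : Wtot = ∑ ℓ ∈ Finset.range (m + 1), w ℓ) :
    fullTourCost m x w xt f σ = listCost f x w xt Wtot 0 xt (List.ofFn fun k => (σ k).val) := by
  rw [listCost_ofFn f x w xt Wtot m (fun k => (σ k).val) 0 xt]
  simp only [zero_add]
  simp only [fullTourCost, ← hW]

lemma exists_perm (m : ℕ) (hW : Wtot = ∑ ℓ ∈ Finset.range (m + 1), w ℓ)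
    (s : ℕ) (hs : s = 0 ∨ s = m) :
    ∃ σ : Equiv.Perm (Fin (m + 1)), fullTourCost m x w xt f σ
      = f 0 * |xt - x s| + gDP f x w xt Wtot 0 m s 0 := by
  obtain ⟨bs, hlen, hbs⟩ := gDP_exists f x w xt Wtot 0 m s 0
  have hperm : (s :: toList 0 m s bs).Perm (List.range (m + 1)) := by
    have := toList_perm bs 0 m s (Nat.zero_le m) (by tauto) (by simpa using hlen)
    simpa [List.range_eq_range'] using this
  set L := s :: toList 0 m s bs with hLdef
  have hlenL : L.length = m + 1 := by
    have := hperm.length_eq; simpa using this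
  have hndL : L.Nodup := hperm.nodup_iff.mpr List.nodup_range
  have hmemL : ∀ a ∈ L, a < m + 1 := fun a ha => List.mem_range.mp (hperm.subset ha)
  have hgetmem : ∀ k : Fin (m + 1), L.get (Fin.cast hlenL.symm k) ∈ L :=
    fun k => L.get_mem (Fin.cast hlenL.symm k)
  let vf : Fin (m + 1) → Fin (m + 1) :=
    fun k => ⟨L.get (Fin.cast hlenL.symm k), hmemL _ (hgetmem k)⟩
  have hinj : Function.Injective vf := by
    intro a b hab
    have h1 : L.get (Fin.cast hlenL.symm a) = L.get (Fin.cast hlenL.symm b) :=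
      congrArg Fin.val hab
    have h2 := (List.nodup_iff_injective_get.mp hndL) h1
    have h3 : (Fin.cast hlenL.symm a).val = (Fin.cast hlenL.symm b).val := congrArg Fin.val h2
    exact Fin.ext h3
  let σ := Equiv.ofBijective vf (Finite.injective_iff_bijective.mp hinj)
  have hofFn : (List.ofFn fun k => (σ k).val) = L := by
    refine List.ext_getElem (by simp [hlenL]) ?_
    intro n h1 h2
    simp only [List.getElem_ofFn]
    rfl
  refine ⟨σ, ?_⟩
  rw [fullTour_eq_listCost f x w xt Wtot m σ hW, hofFn, hLdef]
  show f 0 * |xt - x s| + listCost f x w xt Wtot (0 + w s) (x s) (toList 0 m s bs) = _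
  rw [← rc_eq_listCost f x w xt Wtot bs 0 m s (by tauto) 0, hbs]

end Aux

/-- Correctness of the path-metric DP: the minimum tour cost over all tours with fixed
start `t` equals `min(g(v_1,v_n,v_1,t) + f(0)·d(t,v_1), g(v_1,v_n,v_n,t) + f(0)·d(t,v_n))`. -/
theorem stmt_10 (m : ℕ) (x w : ℕ → ℝ) (hx : Monotone x) (hw : ∀ ℓ, 0 ≤ w ℓ)
    (f : ℝ → ℝ) (hf : Monotone f) (hf0 : ∀ y, 0 ≤ f y) (xt : ℝ)
    (Wtot : ℝ) (hWtot : Wtot = ∑ ℓ ∈ Finset.range (m + 1), w ℓ) :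
    IsLeast (Set.range (fullTourCost m x w xt f))
      (min (f 0 * |xt - x 0| + gDP f x w xt Wtot 0 m 0 0)
           (f 0 * |xt - x m| + gDP f x w xt Wtot 0 m m 0)) := by
  constructor
  · obtain ⟨σ0, h0⟩ := exists_perm f x w xt Wtot m hWtot 0 (Or.inl rfl)
    obtain ⟨σm, hm⟩ := exists_perm f x w xt Wtot m hWtot m (Or.inr rfl)
    rcases le_total (f 0 * |xt - x 0| + gDP f x w xt Wtot 0 m 0 0)
        (f 0 * |xt - x m| + gDP f x w xt Wtot 0 m m 0) with h | h
    · exact ⟨σ0, by rw [h0, min_eq_left h]⟩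
    · exact ⟨σm, by rw [hm, min_eq_right h]⟩
  · rintro c ⟨σ, rfl⟩
    rw [fullTour_eq_listCost f x w xt Wtot m σ hWtot]
    set L := List.ofFn (fun k => ((σ k : Fin (m + 1))).val) with hLdef
    have hndL : L.Nodup := by
      rw [hLdef, List.nodup_ofFn]
      exact fun a b hab => σ.injective (Fin.ext hab)
    have hmem : ∀ a, a < m + 1 → a ∈ L := by
      intro a ha
      rw [hLdef, List.mem_ofFn]
      exact ⟨σ.symm ⟨a, ha⟩, by simp⟩
    have hmem' : ∀ a ∈ L, a < m + 1 := by
      intro a ha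
      rw [hLdef, List.mem_ofFn] at ha
      obtain ⟨k, rfl⟩ := ha
      exact (σ k).isLt
    have hS : L.toFinset.Nonempty := ⟨0, List.mem_toFinset.mpr (hmem 0 (by omega))⟩
    have hmin : L.toFinset.min' hS = 0 :=
      le_antisymm (Finset.min'_le _ 0 (List.mem_toFinset.mpr (hmem 0 (by omega)))) (Nat.zero_le _)
    have hmax : L.toFinset.max' hS = m :=
      le_antisymm
        (Finset.max'_le _ _ _ fun a ha => by
          have := hmem' a (List.mem_toFinset.mp ha); omega)
        (Finset.le_max' _ m (List.mem_toFinset.mpr (hmem m (by omega))))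
    have hl := lower f x w xt Wtot hx hw hf hf0 L hndL hS 0 xt
    rw [hmin, hmax] at hl
    have hD : Finset.Icc 0 m \ L.toFinset = ∅ := by
      rw [Finset.sdiff_eq_empty_iff_subset]
      intro a ha
      refine List.mem_toFinset.mpr (hmem a ?_)
      simp only [Finset.mem_Icc] at ha
      omega
    rw [hD, Finset.sum_empty, add_zero] at hl
    exact hl
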